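/- Let M be the set of monomials X_K Y_L Z_{[1,n]\{i}} for some fixed i, where K ∪ L = [1,n]\{i-1,i+1}, K ∩ L = ∅. If m ∈ M and x_l divides m, then (y_l/x_l)·m ∈ M; if y_k divides m, then (x_k/y_k)·m ∈ M; and if both x_l and y_k divide m (l ≠ k), then (x_k y_l)/(x_l y_k)·m ∈ M. Consequently, the S-polynomial of any binomial c·Δ_{l,k} whose terms are squarefree with any m ∈ M reduces to zero modulo the set M together with c·Δ_{l,k}. -/

import Mathlib

open MvPolynomial

/-- 1-based index `i ∈ [1,n]` as an element of `Fin n`. -/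
def fi (n : ℕ) (hn : 0 < n) (i : ℕ) : Fin n := ⟨(i - 1) % n, Nat.mod_lt _ hn⟩

noncomputable def xz (k : Type*) [Field k] (n : ℕ) (hn : 0 < n) (i : ℕ) :
    MvPolynomial (Fin 3 × Fin n) k := X (0, fi n hn i)

noncomputable def yz (k : Type*) [Field k] (n : ℕ) (hn : 0 < n) (i : ℕ) :
    MvPolynomial (Fin 3 × Fin n) k := X (1, fi n hn i)

noncomputable def zz (k : Type*) [Field k] (n : ℕ) (hn : 0 < n) (i : ℕ) :
    MvPolynomial (Fin 3 × Fin n) k := X (2, fi n hn i)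

noncomputable def Δz (k : Type*) [Field k] (n : ℕ) (hn : 0 < n) (a b : ℕ) :
    MvPolynomial (Fin 3 × Fin n) k :=
  xz k n hn a * yz k n hn b - xz k n hn b * yz k n hn a

/-- The squarefree monomial `X_K Y_L Z_{[1,n]\{i}}`. -/
noncomputable def monOf (k : Type*) [Field k] (n : ℕ) (hn : 0 < n)
    (K L : Finset ℕ) (i : ℕ) : MvPolynomial (Fin 3 × Fin n) k :=
  (∏ t ∈ K, xz k n hn t) * (∏ t ∈ L, yz k n hn t) *
    ∏ t ∈ (Finset.Icc 1 n).erase i, zz k n hn t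

/-- The set `M` of monomials `X_K Y_L Z_{[1,n]\{i}}` with
`K ∪ L = [1,n]\{i-1,i+1}` and `K ∩ L = ∅`. -/
noncomputable def Mset (k : Type*) [Field k] (n : ℕ) (hn : 0 < n) (i : ℕ) :
    Set (MvPolynomial (Fin 3 × Fin n) k) :=
  {m | ∃ K L : Finset ℕ, K ∪ L = Finset.Icc 1 n \ {i - 1, i + 1} ∧ Disjoint K L ∧
    m = monOf k n hn K L i}

/-- `v` is more significant than `w` for the variable order
`x_1 > … > x_n > y_1 > … > y_n > z_1 > … > z_n`. -/
def vlt (n : ℕ) (v w : Fin 3 × Fin n) : Prop :=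
  v.1 < w.1 ∨ (v.1 = w.1 ∧ v.2 < w.2)

def mdeg (n : ℕ) (a : (Fin 3 × Fin n) →₀ ℕ) : ℕ := a.sum fun _ e => e

/-- Graded reverse lexicographic comparison of exponent vectors. -/
def rlt (n : ℕ) (a b : (Fin 3 × Fin n) →₀ ℕ) : Prop :=
  mdeg n a < mdeg n b ∨
    (mdeg n a = mdeg n b ∧ ∃ v, b v < a v ∧ ∀ w, vlt n v w → a w = b w)

/-- `d` is the exponent of the initial term of `f` w.r.t. reverse lex order. -/
def IsInit {k : Type*} [Field k] (n : ℕ) (f : MvPolynomial (Fin 3 × Fin n) k)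
    (d : (Fin 3 × Fin n) →₀ ℕ) : Prop :=
  d ∈ f.support ∧ ∀ e ∈ f.support, e ≠ d → rlt n e d

/-- Exponent vector of the squarefree monomial `X_A Y_B Z_C`. -/
noncomputable def expOf (n : ℕ) (hn : 0 < n) (A B Cs : Finset ℕ) :
    (Fin 3 × Fin n) →₀ ℕ :=
  (∑ t ∈ A, Finsupp.single ((0 : Fin 3), fi n hn t) 1) +
  (∑ t ∈ B, Finsupp.single ((1 : Fin 3), fi n hn t) 1) +
  (∑ t ∈ Cs, Finsupp.single ((2 : Fin 3), fi n hn t) 1)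

section Helpers

open Finset

lemma prodX_eq {k : Type*} [Field k] {n : ℕ} (hn : 0 < n) (j : Fin 3) (A : Finset ℕ) :
    (∏ t ∈ A, (X (j, fi n hn t) : MvPolynomial (Fin 3 × Fin n) k)) =
      monomial (∑ t ∈ A, Finsupp.single (j, fi n hn t) 1) 1 :=
  (monomial_sum_one A _).symm

lemma monOf_eq {k : Type*} [Field k] {n : ℕ} (hn : 0 < n) (K L : Finset ℕ) (i : ℕ) :
    monOf k n hn K L i = monomial (expOf n hn K L ((Finset.Icc 1 n).erase i)) 1 := by
  have h0 : (∏ t ∈ K, xz k n hn t)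
      = monomial (∑ t ∈ K, Finsupp.single ((0:Fin 3), fi n hn t) 1) 1 := prodX_eq hn 0 K
  have h1 : (∏ t ∈ L, yz k n hn t)
      = monomial (∑ t ∈ L, Finsupp.single ((1:Fin 3), fi n hn t) 1) 1 := prodX_eq hn 1 L
  have h2 : (∏ t ∈ (Finset.Icc 1 n).erase i, zz k n hn t)
      = monomial (∑ t ∈ (Finset.Icc 1 n).erase i, Finsupp.single ((2:Fin 3), fi n hn t) 1) 1 :=
    prodX_eq hn 2 _
  rw [monOf, h0, h1, h2, monomial_mul, monomial_mul, one_mul, one_mul]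
  rfl

lemma sumsingle_apply {n : ℕ} (hn : 0 < n) (j : Fin 3) (A : Finset ℕ)
    (hA : A ⊆ Finset.Icc 1 n) (v : Fin 3 × Fin n) :
    (∑ t ∈ A, Finsupp.single (j, fi n hn t) (1 : ℕ)) v =
      if v.1 = j ∧ (v.2 : ℕ) + 1 ∈ A then 1 else 0 := by
  rw [Finsupp.finset_sum_apply]
  have key : ∀ t ∈ A, (Finsupp.single (j, fi n hn t) (1:ℕ)) v
      = if t = (v.2 : ℕ) + 1 then (if v.1 = j then 1 else 0) else 0 := by
    intro t ht
    obtain ⟨h1, h2⟩ := Finset.mem_Icc.mp (hA ht)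
    rw [Finsupp.single_apply]
    have hmod : (t - 1) % n = t - 1 := Nat.mod_eq_of_lt (by omega)
    have hiff : ((j, fi n hn t) = v) ↔ (t = (v.2:ℕ)+1 ∧ v.1 = j) := by
      obtain ⟨j', u⟩ := v
      have hu : (u : ℕ) < n := u.isLt
      simp only [Prod.mk.injEq, fi, Fin.ext_iff, hmod]
      constructor
      · rintro ⟨a, b⟩; exact ⟨by omega, by omega⟩
      · rintro ⟨a, b⟩; exact ⟨by omega, by omega⟩
    rw [if_congr hiff rfl rfl]
    split_ifs with h h' h' <;> tauto
  rw [Finset.sum_congr rfl key, Finset.sum_ite_eq' A ((v.2:ℕ)+1)]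
  split_ifs with h h' h' <;> tauto

lemma expOf_apply {n : ℕ} (hn : 0 < n) (A B C : Finset ℕ)
    (hA : A ⊆ Finset.Icc 1 n) (hB : B ⊆ Finset.Icc 1 n) (hC : C ⊆ Finset.Icc 1 n)
    (v : Fin 3 × Fin n) :
    expOf n hn A B C v =
      (if v.1 = 0 ∧ (v.2 : ℕ) + 1 ∈ A then 1 else 0) +
      (if v.1 = 1 ∧ (v.2 : ℕ) + 1 ∈ B then 1 else 0) +
      (if v.1 = 2 ∧ (v.2 : ℕ) + 1 ∈ C then 1 else 0) := by
  simp only [expOf, Finsupp.add_apply, sumsingle_apply hn _ _ hA v,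
    sumsingle_apply hn _ _ hB v, sumsingle_apply hn _ _ hC v]

lemma isInit_neg_monomial {k : Type*} [Field k] {n : ℕ} (E : (Fin 3 × Fin n) →₀ ℕ) :
    IsInit n (-(monomial E (1:k))) E := by
  constructor
  · simp [MvPolynomial.support_neg, support_monomial]
  · intro e he hne
    exfalso
    have he' : E = e := by
      simpa [MvPolynomial.support_neg, support_monomial] using he
    exact hne he'.symm

lemma expOf_apply' {n : ℕ} (hn : 0 < n) (A B C : Finset ℕ)
    (hA : A ⊆ Finset.Icc 1 n) (hB : B ⊆ Finset.Icc 1 n) (hC : C ⊆ Finset.Icc 1 n)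
    (j : Fin 3) (u : Fin n) :
    expOf n hn A B C (j, u) =
      (if j = 0 ∧ (u : ℕ) + 1 ∈ A then 1 else 0) +
      (if j = 1 ∧ (u : ℕ) + 1 ∈ B then 1 else 0) +
      (if j = 2 ∧ (u : ℕ) + 1 ∈ C then 1 else 0) :=
  expOf_apply hn A B C hA hB hC (j, u)


lemma expOf_le {n : ℕ} (hn : 0 < n) (l m : ℕ) (A B Cs K L Z : Finset ℕ)
    (hlm : l ≠ m) (hlA : l ∉ A) (hmA : m ∉ A) (hlB : l ∉ B) (hmB : m ∉ B)
    (hlI : l ∈ Finset.Icc 1 n) (hmI : m ∈ Finset.Icc 1 n)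
    (hAI : A ⊆ Finset.Icc 1 n) (hBI : B ⊆ Finset.Icc 1 n) (hCI : Cs ⊆ Finset.Icc 1 n)
    (hKI : K ⊆ Finset.Icc 1 n) (hLI : L ⊆ Finset.Icc 1 n) (hZI : Z ⊆ Finset.Icc 1 n) :
    expOf n hn ((K \ {l}) ∪ (L ∩ {m})) ((L \ {m}) ∪ (K ∩ {l})) Z ≤
      (expOf n hn K L Z -
        (expOf n hn (insert l A) (insert m B) Cs ⊓ expOf n hn K L Z)) +
        expOf n hn (insert m A) (insert l B) Cs := by
  have hK'I : (K \ {l}) ∪ (L ∩ {m}) ⊆ Finset.Icc 1 n := by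
    intro p hp
    simp only [Finset.mem_union, Finset.mem_sdiff, Finset.mem_inter,
      Finset.mem_singleton] at hp
    rcases hp with ⟨h, _⟩ | ⟨h, _⟩
    exacts [hKI h, hLI h]
  have hL'I : (L \ {m}) ∪ (K ∩ {l}) ⊆ Finset.Icc 1 n := by
    intro p hp
    simp only [Finset.mem_union, Finset.mem_sdiff, Finset.mem_inter,
      Finset.mem_singleton] at hp
    rcases hp with ⟨h, _⟩ | ⟨h, _⟩
    exacts [hLI h, hKI h]
  have hlAI : insert l A ⊆ Finset.Icc 1 n := Finset.insert_subset hlI hAI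
  have hmBI : insert m B ⊆ Finset.Icc 1 n := Finset.insert_subset hmI hBI
  have hmAI : insert m A ⊆ Finset.Icc 1 n := Finset.insert_subset hmI hAI
  have hlBI : insert l B ⊆ Finset.Icc 1 n := Finset.insert_subset hlI hBI
  rw [Finsupp.le_def]
  intro v
  obtain ⟨j, u⟩ := v
  rw [Finsupp.add_apply, Finsupp.tsub_apply, Finsupp.inf_apply]
  rw [expOf_apply' hn _ _ _ hK'I hL'I hZI, expOf_apply' hn _ _ _ hlAI hmBI hCI,
      expOf_apply' hn _ _ _ hmAI hlBI hCI, expOf_apply' hn _ _ _ hKI hLI hZI]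
  obtain ⟨jv, hj⟩ := j
  have c0 : ((⟨jv, hj⟩ : Fin 3) = 0) ↔ jv = 0 := by rw [Fin.ext_iff]; simp
  have c1 : ((⟨jv, hj⟩ : Fin 3) = 1) ↔ jv = 1 := by rw [Fin.ext_iff]; simp
  have c2 : ((⟨jv, hj⟩ : Fin 3) = 2) ↔ jv = 2 := by rw [Fin.ext_iff]; simp
  simp only [c0, c1, c2, Finset.mem_union, Finset.mem_sdiff,
    Finset.mem_inter, Finset.mem_singleton, Finset.mem_insert]
  clear hAI hBI hCI hKI hLI hZI hlI hmI hK'I hL'I hlAI hmBI hmAI hlBI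
  interval_cases jv <;>
    · norm_num
      split_ifs <;> first | omega | tauto


end Helpers

set_option maxHeartbeats 2000000 in
/-- Closure of the set `M` under the variable swaps
`x_l ↦ y_l`, `y_k ↦ x_k`, and the consequence: the S-polynomial of a squarefree
binomial `c·Δ_{l,k}` with any `m ∈ M` reduces to zero modulo `M ∪ {c·Δ_{l,k}}`. -/

theorem stmt15 (k : Type*) [Field k] (n : ℕ) (hn : 4 ≤ n) (i : ℕ)
    (hi1 : 1 ≤ i) (hin : i ≤ n) :
    -- closure claims
    (∀ K L : Finset ℕ, K ∪ L = Finset.Icc 1 n \ {i - 1, i + 1} → Disjoint K L →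
      (∀ l ∈ K, monOf k n (by omega) (K.erase l) (insert l L) i ∈ Mset k n (by omega) i) ∧
      (∀ m ∈ L, monOf k n (by omega) (insert m K) (L.erase m) i ∈ Mset k n (by omega) i) ∧
      (∀ l ∈ K, ∀ m ∈ L,
        monOf k n (by omega) (insert m (K.erase l)) (insert l (L.erase m)) i ∈
          Mset k n (by omega) i)) ∧
    -- S-polynomial consequence
    (∀ l m : ℕ, 1 ≤ m → m < l → l ≤ n →
      ∀ A B Cs : Finset ℕ, l ∉ A → m ∉ A → l ∉ B → m ∉ B →
      A ⊆ Finset.Icc 1 n → B ⊆ Finset.Icc 1 n → Cs ⊆ Finset.Icc 1 n →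
      ∀ K L : Finset ℕ, K ∪ L = Finset.Icc 1 n \ {i - 1, i + 1} → Disjoint K L →
      ∃ (T : Finset (MvPolynomial (Fin 3 × Fin n) k))
        (h : MvPolynomial (Fin 3 × Fin n) k → MvPolynomial (Fin 3 × Fin n) k),
        ↑T ⊆ Mset k n (by omega) i ∪
          {(∏ t ∈ A, xz k n (by omega) t) * (∏ t ∈ B, yz k n (by omega) t) *
            (∏ t ∈ Cs, zz k n (by omega) t) * Δz k n (by omega) l m} ∧
        (monomial (expOf n (by omega) K L ((Finset.Icc 1 n).erase i) -
            (expOf n (by omega) (insert l A) (insert m B) Cs ⊓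
              expOf n (by omega) K L ((Finset.Icc 1 n).erase i))) (1 : k)) *
          ((∏ t ∈ A, xz k n (by omega) t) * (∏ t ∈ B, yz k n (by omega) t) *
            (∏ t ∈ Cs, zz k n (by omega) t) * Δz k n (by omega) l m) -
        (monomial (expOf n (by omega) (insert l A) (insert m B) Cs -
            (expOf n (by omega) (insert l A) (insert m B) Cs ⊓
              expOf n (by omega) K L ((Finset.Icc 1 n).erase i))) (1 : k)) *
          monOf k n (by omega) K L i =
          ∑ u ∈ T, h u * u ∧
        ∀ u ∈ T, ∀ e, IsInit n (h u * u) e →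
          ∃ d, IsInit n
            ((monomial (expOf n (by omega) K L ((Finset.Icc 1 n).erase i) -
                (expOf n (by omega) (insert l A) (insert m B) Cs ⊓
                  expOf n (by omega) K L ((Finset.Icc 1 n).erase i))) (1 : k)) *
              ((∏ t ∈ A, xz k n (by omega) t) * (∏ t ∈ B, yz k n (by omega) t) *
                (∏ t ∈ Cs, zz k n (by omega) t) * Δz k n (by omega) l m) -
            (monomial (expOf n (by omega) (insert l A) (insert m B) Cs -
                (expOf n (by omega) (insert l A) (insert m B) Cs ⊓
                  expOf n (by omega) K L ((Finset.Icc 1 n).erase i))) (1 : k)) *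
              monOf k n (by omega) K L i) d ∧ (e = d ∨ rlt n e d)) := by
  have hn0 : 0 < n := by omega
  constructor
  · -- closure claims
    intro K L hu hd
    refine ⟨?_, ?_, ?_⟩
    · intro l hl
      refine ⟨K.erase l, insert l L, ?_, ?_, rfl⟩
      · rw [← hu]; ext p
        simp only [Finset.mem_union, Finset.mem_erase, Finset.mem_insert]
        constructor
        · rintro ((⟨_, h⟩) | (rfl | h)) <;> tauto
        · rintro (h | h)
          · by_cases hpl : p = l <;> tauto
          · tauto
      · rw [Finset.disjoint_insert_right]
        exact ⟨Finset.notMem_erase l K,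
          Finset.disjoint_of_subset_left (Finset.erase_subset l K) hd⟩
    · intro m hm
      refine ⟨insert m K, L.erase m, ?_, ?_, rfl⟩
      · rw [← hu]; ext p
        simp only [Finset.mem_union, Finset.mem_erase, Finset.mem_insert]
        constructor
        · rintro ((rfl | h) | ⟨_, h⟩) <;> tauto
        · rintro (h | h)
          · tauto
          · by_cases hpm : p = m <;> tauto
      · rw [Finset.disjoint_insert_left]
        exact ⟨Finset.notMem_erase m L,
          Finset.disjoint_of_subset_right (Finset.erase_subset m L) hd⟩
    · intro l hl m hm
      have hlm : l ≠ m := fun h => Finset.disjoint_left.mp hd hl (h ▸ hm)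
      refine ⟨insert m (K.erase l), insert l (L.erase m), ?_, ?_, rfl⟩
      · rw [← hu]; ext p
        simp only [Finset.mem_union, Finset.mem_erase, Finset.mem_insert]
        constructor
        · rintro ((rfl | ⟨_, h⟩) | (rfl | ⟨_, h⟩)) <;> tauto
        · rintro (h | h)
          · by_cases hpl : p = l <;> tauto
          · by_cases hpm : p = m <;> tauto
      · rw [Finset.disjoint_left]
        intro p hp hq
        simp only [Finset.mem_insert, Finset.mem_erase] at hp hq
        have hd' : ∀ a, a ∈ K → a ∈ L → False :=
          fun a ha hb => Finset.disjoint_left.mp hd ha hb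
        rcases hp with rfl | ⟨hpl, hpK⟩
        · rcases hq with h | ⟨h, _⟩
          · exact hlm h.symm
          · exact h rfl
        · rcases hq with rfl | ⟨_, hpL⟩
          · exact hpl rfl
          · exact hd' p hpK hpL
  · -- S-polynomial consequence
    intro l m h1m hml hln A B Cs hlA hmA hlB hmB hAI hBI hCI K L hu hd
    have hd' : ∀ a, a ∈ K → a ∈ L → False :=
      fun a ha hb => Finset.disjoint_left.mp hd ha hb
    have hlm : l ≠ m := by omega
    have hKLsub : K ∪ L ⊆ Finset.Icc 1 n := by
      rw [hu]; exact Finset.sdiff_subset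
    have hKI : K ⊆ Finset.Icc 1 n := (Finset.subset_union_left).trans hKLsub
    have hLI : L ⊆ Finset.Icc 1 n := (Finset.subset_union_right).trans hKLsub
    have hlI : l ∈ Finset.Icc 1 n := Finset.mem_Icc.mpr ⟨by omega, by omega⟩
    have hmI : m ∈ Finset.Icc 1 n := Finset.mem_Icc.mpr ⟨by omega, by omega⟩
    have hlAI : insert l A ⊆ Finset.Icc 1 n := Finset.insert_subset hlI hAI
    have hmBI : insert m B ⊆ Finset.Icc 1 n := Finset.insert_subset hmI hBI
    have hmAI : insert m A ⊆ Finset.Icc 1 n := Finset.insert_subset hmI hAI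
    have hlBI : insert l B ⊆ Finset.Icc 1 n := Finset.insert_subset hlI hBI
    set Z := (Finset.Icc 1 n).erase i with hZdef
    have hZI : Z ⊆ Finset.Icc 1 n := by rw [hZdef]; exact Finset.erase_subset _ _
    set K' := (K \ {l}) ∪ (L ∩ {m}) with hK'def
    set L' := (L \ {m}) ∪ (K ∩ {l}) with hL'def
    have hK'I : K' ⊆ Finset.Icc 1 n := by
      intro p hp
      rw [hK'def] at hp
      simp only [Finset.mem_union, Finset.mem_sdiff, Finset.mem_inter,
        Finset.mem_singleton] at hp
      rcases hp with ⟨h, _⟩ | ⟨h, _⟩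
      exacts [hKI h, hLI h]
    have hL'I : L' ⊆ Finset.Icc 1 n := by
      intro p hp
      rw [hL'def] at hp
      simp only [Finset.mem_union, Finset.mem_sdiff, Finset.mem_inter,
        Finset.mem_singleton] at hp
      rcases hp with ⟨h, _⟩ | ⟨h, _⟩
      exacts [hLI h, hKI h]
    have hU' : K' ∪ L' = Finset.Icc 1 n \ {i - 1, i + 1} := by
      rw [← hu, hK'def, hL'def]
      ext p
      simp only [Finset.mem_union, Finset.mem_sdiff, Finset.mem_inter, Finset.mem_singleton]
      constructor
      · rintro ((⟨h, _⟩ | ⟨h, _⟩) | (⟨h, _⟩ | ⟨h, _⟩)) <;> tauto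
      · intro h
        by_cases hpl : p = l <;> by_cases hpm : p = m <;> tauto
    have hD' : Disjoint K' L' := by
      rw [Finset.disjoint_left]
      intro p hp hq
      rw [hK'def] at hp; rw [hL'def] at hq
      simp only [Finset.mem_union, Finset.mem_sdiff, Finset.mem_inter,
        Finset.mem_singleton] at hp hq
      rcases hp with ⟨hpK, hpl⟩ | ⟨hpL, rfl⟩
      · rcases hq with ⟨hpL, _⟩ | ⟨_, rfl⟩
        · exact hd' p hpK hpL
        · exact hpl rfl
      · rcases hq with ⟨_, hmm'⟩ | ⟨_, hml'⟩
        · exact hmm' rfl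
        · exact hlm hml'.symm
    -- exponent vectors
    set e1 := expOf n hn0 (insert l A) (insert m B) Cs with he1
    set e1' := expOf n hn0 (insert m A) (insert l B) Cs with he1'
    set e2 := expOf n hn0 K L Z with he2
    set e2' := expOf n hn0 K' L' Z with he2'
    set E := (e2 - (e1 ⊓ e2)) + e1' with hE
    have hle : e2' ≤ E := by
      rw [hE, he1, he1', he2, he2', hK'def, hL'def]
      exact expOf_le hn0 l m A B Cs K L Z hlm hlA hmA hlB hmB hlI hmI
        hAI hBI hCI hKI hLI hZI
    have hswap : e2 - (e1 ⊓ e2) + e1 = e1 - (e1 ⊓ e2) + e2 := by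
      ext v
      simp only [Finsupp.add_apply, Finsupp.tsub_apply, Finsupp.inf_apply]
      omega
    have hmon : monOf k n hn0 K L i = monomial e2 1 := by
      rw [he2, hZdef]; exact monOf_eq hn0 K L i
    have hmon' : monOf k n hn0 K' L' i = monomial e2' 1 := by
      rw [he2', hZdef]; exact monOf_eq hn0 K' L' i
    have hsplit1 : (∑ t ∈ A, Finsupp.single ((0 : Fin 3), fi n hn0 t) 1) +
        (∑ t ∈ B, Finsupp.single ((1 : Fin 3), fi n hn0 t) 1) +
        (∑ t ∈ Cs, Finsupp.single ((2 : Fin 3), fi n hn0 t) 1) +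
        (Finsupp.single ((0 : Fin 3), fi n hn0 l) 1 +
          Finsupp.single ((1 : Fin 3), fi n hn0 m) 1) = e1 := by
      rw [he1]
      unfold expOf
      rw [Finset.sum_insert hlA, Finset.sum_insert hmB]
      abel
    have hsplit2 : (∑ t ∈ A, Finsupp.single ((0 : Fin 3), fi n hn0 t) 1) +
        (∑ t ∈ B, Finsupp.single ((1 : Fin 3), fi n hn0 t) 1) +
        (∑ t ∈ Cs, Finsupp.single ((2 : Fin 3), fi n hn0 t) 1) +
        (Finsupp.single ((0 : Fin 3), fi n hn0 m) 1 +
          Finsupp.single ((1 : Fin 3), fi n hn0 l) 1) = e1' := by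
      rw [he1']
      unfold expOf
      rw [Finset.sum_insert hmA, Finset.sum_insert hlB]
      abel
    have hΔ : Δz k n hn0 l m =
        monomial (Finsupp.single ((0 : Fin 3), fi n hn0 l) 1 +
          Finsupp.single ((1 : Fin 3), fi n hn0 m) 1) (1 : k) -
        monomial (Finsupp.single ((0 : Fin 3), fi n hn0 m) 1 +
          Finsupp.single ((1 : Fin 3), fi n hn0 l) 1) 1 := by
      show monomial (Finsupp.single ((0 : Fin 3), fi n hn0 l) 1) (1 : k) *
          monomial (Finsupp.single ((1 : Fin 3), fi n hn0 m) 1) 1 -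
          monomial (Finsupp.single ((0 : Fin 3), fi n hn0 m) 1) (1 : k) *
          monomial (Finsupp.single ((1 : Fin 3), fi n hn0 l) 1) 1 = _
      rw [monomial_mul, monomial_mul, one_mul]
    have hg : (∏ t ∈ A, xz k n hn0 t) * (∏ t ∈ B, yz k n hn0 t) *
        (∏ t ∈ Cs, zz k n hn0 t) * Δz k n hn0 l m
        = monomial e1 (1 : k) - monomial e1' 1 := by
      rw [show (∏ t ∈ A, xz k n hn0 t) =
            monomial (∑ t ∈ A, Finsupp.single ((0 : Fin 3), fi n hn0 t) 1) (1:k) from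
            prodX_eq hn0 0 A,
          show (∏ t ∈ B, yz k n hn0 t) =
            monomial (∑ t ∈ B, Finsupp.single ((1 : Fin 3), fi n hn0 t) 1) (1:k) from
            prodX_eq hn0 1 B,
          show (∏ t ∈ Cs, zz k n hn0 t) =
            monomial (∑ t ∈ Cs, Finsupp.single ((2 : Fin 3), fi n hn0 t) 1) (1:k) from
            prodX_eq hn0 2 Cs,
          hΔ, mul_sub]
      simp only [monomial_mul, one_mul]
      rw [hsplit1, hsplit2]
    have hbig : monomial (e2 - (e1 ⊓ e2)) (1 : k) *
        ((∏ t ∈ A, xz k n hn0 t) * (∏ t ∈ B, yz k n hn0 t) *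
          (∏ t ∈ Cs, zz k n hn0 t) * Δz k n hn0 l m) -
        monomial (e1 - (e1 ⊓ e2)) 1 * monOf k n hn0 K L i = -monomial E 1 := by
      rw [hg, hmon, mul_sub]
      simp only [monomial_mul, one_mul]
      rw [hswap, ← hE]
      exact sub_sub_cancel_left _ _
    have hval : -monomial (E - e2') (1 : k) * monOf k n hn0 K' L' i = -monomial E 1 := by
      rw [hmon', neg_mul, monomial_mul, one_mul, tsub_add_cancel_of_le hle]
    refine ⟨{monOf k n hn0 K' L' i}, fun _ => -monomial (E - e2') (1 : k), ?_, ?_, ?_⟩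
    · intro q hq
      rw [Finset.coe_singleton, Set.mem_singleton_iff] at hq
      subst hq
      exact Or.inl ⟨K', L', hU', hD', rfl⟩
    · have key2 : monomial (e2 - (e1 ⊓ e2)) (1 : k) *
          ((∏ t ∈ A, xz k n hn0 t) * (∏ t ∈ B, yz k n hn0 t) *
            (∏ t ∈ Cs, zz k n hn0 t) * Δz k n hn0 l m) -
          monomial (e1 - (e1 ⊓ e2)) 1 * monOf k n hn0 K L i =
          ∑ u ∈ ({monOf k n hn0 K' L' i} : Finset (MvPolynomial (Fin 3 × Fin n) k)),
            (fun _ => -monomial (E - e2') (1 : k)) u * u := by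
        rw [Finset.sum_singleton, hbig]
        exact hval.symm
      exact key2
    · intro u hu' e he
      rw [Finset.mem_singleton] at hu'
      subst hu'
      have h1 := he.1
      rw [show ((fun _ => -monomial (E - e2') (1 : k)) (monOf k n hn0 K' L' i) *
            monOf k n hn0 K' L' i) = -monomial E 1 from hval] at h1
      have heE : e = E := by
        have hEe : E = e := by
          simpa [MvPolynomial.support_neg, support_monomial] using h1
        exact hEe.symm
      refine ⟨E, ?_, Or.inl heE⟩
      have key3 : IsInit n (monomial (e2 - (e1 ⊓ e2)) (1 : k) *
          ((∏ t ∈ A, xz k n hn0 t) * (∏ t ∈ B, yz k n hn0 t) *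
            (∏ t ∈ Cs, zz k n hn0 t) * Δz k n hn0 l m) -
          monomial (e1 - (e1 ⊓ e2)) 1 * monOf k n hn0 K L i) E := by
        rw [hbig]
        exact isInit_neg_monomial E
      exact key3
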